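/- Under the hypotheses that θ > -∞, w satisfies the standard Logit utility assumptions, eventually decreases sufficiently quickly, and has sub-quadratic second derivatives, the profit function π̂_f(·, p_{-f}) of each firm f (with constant unit costs, any fixed competitor prices p_{-f}) has a unique stationary point in (c_f, ∞)^{J_f}, and this point is the unique global maximizer of π̂_f(·, p_{-f}) over [0,∞]^{J_f}. The proof combines: every stationary point is a local maximizer with index (-1)^{J_f} for the gradient field, hence index 1 for the field φ_f, and the Poincaré–Hopf theorem forces the sum of indices over zeros of φ_f on a rectangle (on whose boundary φ_f points outward) to equal 1. -/

import Mathlib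

open Filter Set

lemma Hmono {W' W'' : ℝ → ℝ} {cj : ℝ}
    (hd2 : ∀ x > (0:ℝ), HasDerivAt W' (W'' x) x)
    (hneg : ∀ x > (0:ℝ), W' x < 0)
    (hsq : ∀ x > (0:ℝ), W'' x / (W' x) ^ 2 < 1)
    {a b : ℝ} (ha : 0 < a) (hab : a < b) :
    a - cj + 1 / W' a < b - cj + 1 / W' b := by
  set f : ℝ → ℝ := fun x => x - cj + 1 / W' x with hf
  have hder : ∀ x ∈ Ioi (0:ℝ), HasDerivAt f (1 - W'' x / (W' x) ^ 2) x := by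
    intro x hx
    have h1 : HasDerivAt (fun y => (W' y)⁻¹) (-W'' x / (W' x) ^ 2) x :=
      (hd2 x hx).inv (ne_of_lt (hneg x hx))
    have h2 : HasDerivAt (fun y => y - cj) 1 x := (hasDerivAt_id x).sub_const cj
    have h3 := h2.add h1
    have he : (1:ℝ) - W'' x / W' x ^ 2 = 1 + -W'' x / W' x ^ 2 := by ring
    rw [he, hf]
    simp only [one_div]
    exact h3
  have hmono : StrictMonoOn f (Icc a b) := by
    apply strictMonoOn_of_deriv_pos (convex_Icc a b)
    · intro x hx
      exact ((hder x (lt_of_lt_of_le ha hx.1)).continuousAt).continuousWithinAt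
    · intro x hx
      rw [interior_Icc] at hx
      have hx0 : (0:ℝ) < x := lt_trans ha hx.1
      rw [(hder x hx0).deriv]
      have := hsq x hx0
      linarith
  exact hmono (left_mem_Icc.2 hab.le) (right_mem_Icc.2 hab.le) hab


lemma Ganti {W W' W'' : ℝ → ℝ} {vj : ℝ}
    (hd1 : ∀ x > (0:ℝ), HasDerivAt W (W' x) x)
    (hd2 : ∀ x > (0:ℝ), HasDerivAt W' (W'' x) x)
    (hneg : ∀ x > (0:ℝ), W' x < 0)
    (hsq : ∀ x > (0:ℝ), W'' x / (W' x) ^ 2 < 1)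
    {a b : ℝ} (ha : 0 < a) (hab : a < b) :
    -Real.exp (W b + vj) / W' b < -Real.exp (W a + vj) / W' a := by
  set g : ℝ → ℝ := fun x => -Real.exp (W x + vj) / W' x with hg
  have hder : ∀ x ∈ Ioi (0:ℝ), HasDerivAt g
      (Real.exp (W x + vj) * (W'' x - (W' x) ^ 2) / (W' x) ^ 2) x := by
    intro x hx
    have hE : HasDerivAt (fun y => Real.exp (W y + vj)) (Real.exp (W x + vj) * W' x) x :=
      ((hd1 x hx).add_const vj).exp
    have hne := ne_of_lt (hneg x hx)
    have := (hE.neg).div (hd2 x hx) hne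
    refine this.congr_deriv ?_
    simp only [Pi.neg_apply]
    field_simp
    ring
  have hanti : StrictAntiOn g (Icc a b) := by
    apply strictAntiOn_of_deriv_neg (convex_Icc a b)
    · intro x hx
      exact ((hder x (lt_of_lt_of_le ha hx.1)).continuousAt).continuousWithinAt
    · intro x hx
      rw [interior_Icc] at hx
      have hx0 : (0:ℝ) < x := lt_trans ha hx.1
      rw [(hder x hx0).deriv]
      have h1 := hsq x hx0
      have h2 : (0:ℝ) < (W' x) ^ 2 := by nlinarith [hneg x hx0]
      have h3 : W'' x < (W' x) ^ 2 := (div_lt_one h2).mp h1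
      have h4 : (0:ℝ) < Real.exp (W x + vj) := Real.exp_pos _
      apply div_neg_of_neg_of_pos _ h2
      nlinarith
  exact hanti (left_mem_Icc.2 hab.le) (right_mem_Icc.2 hab.le) hab


-- key: ψ x = exp (W x + vj) * (x - cj - m) is uniquely maximized over [0,∞) at p0
lemma psi_max {W W' W'' : ℝ → ℝ} {vj cj m p0 : ℝ}
    (hd1 : ∀ x > (0:ℝ), HasDerivAt W (W' x) x)
    (hd2 : ∀ x > (0:ℝ), HasDerivAt W' (W'' x) x)
    (hneg : ∀ x > (0:ℝ), W' x < 0)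
    (hsq : ∀ x > (0:ℝ), W'' x / (W' x) ^ 2 < 1)
    (hcj : 0 < cj) (hm : 0 < m) (hp0 : 0 < p0)
    (hfix : p0 - cj + 1 / W' p0 = m) :
    ∀ x, 0 ≤ x → x ≠ p0 →
      Real.exp (W x + vj) * (x - cj - m) < Real.exp (W p0 + vj) * (p0 - cj - m) := by
  have hw0 := hneg p0 hp0
  have hR : p0 - cj - m = -(1 / W' p0) := by linarith
  have hRpos : 0 < p0 - cj - m := by
    rw [hR]
    simp only [one_div]
    have : (W' p0)⁻¹ < 0 := inv_neg''.mpr hw0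
    linarith
  have hRHS : 0 < Real.exp (W p0 + vj) * (p0 - cj - m) := by positivity
  set ψ : ℝ → ℝ := fun x => Real.exp (W x + vj) * (x - cj - m) with hψ
  have hder : ∀ x ∈ Ioi (0:ℝ), HasDerivAt ψ
      (Real.exp (W x + vj) * (1 + W' x * (x - cj - m))) x := by
    intro x hx
    have hE : HasDerivAt (fun y => Real.exp (W y + vj)) (Real.exp (W x + vj) * W' x) x :=
      ((hd1 x hx).add_const vj).exp
    have h2 : HasDerivAt (fun y => y - cj - m) 1 x :=
      ((hasDerivAt_id x).sub_const cj).sub_const m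
    have h3 := hE.mul h2
    refine h3.congr_deriv ?_
    ring
  -- sign of 1 + W' y * (y - cj - m)
  have hsign_pos : ∀ y, 0 < y → y < p0 → 0 < 1 + W' y * (y - cj - m) := by
    intro y hy hyp
    have hH := Hmono (cj := cj) hd2 hneg hsq hy hyp
    rw [hfix] at hH
    have hwy := hneg y hy
    have hinv : W' y * (1 / W' y) = 1 := by
      field_simp
      try exact div_self (ne_of_lt hwy)
    nlinarith
  have hsign_neg : ∀ y, p0 < y → 1 + W' y * (y - cj - m) < 0 := by
    intro y hyp
    have hH := Hmono (cj := cj) hd2 hneg hsq hp0 hyp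
    rw [hfix] at hH
    have hwy := hneg y (lt_trans hp0 hyp)
    have hinv : W' y * (1 / W' y) = 1 := by
      field_simp
      try exact div_self (ne_of_lt hwy)
    nlinarith
  intro x hx hne
  rcases eq_or_lt_of_le hx with h0 | hxpos
  · -- x = 0
    have : ψ 0 < 0 := by
      have : (0:ℝ) - cj - m < 0 := by linarith
      have he : (0:ℝ) < Real.exp (W 0 + vj) := Real.exp_pos _
      simpa [hψ] using mul_neg_of_pos_of_neg he this
    rw [← h0]
    exact lt_trans this hRHS
  · rcases lt_trichotomy x p0 with hlt | heq | hgt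
    · -- strict mono on [x, p0]
      have hmono : StrictMonoOn ψ (Icc x p0) := by
        apply strictMonoOn_of_deriv_pos (convex_Icc x p0)
        · intro y hy
          exact ((hder y (lt_of_lt_of_le hxpos hy.1)).continuousAt).continuousWithinAt
        · intro y hy
          rw [interior_Icc] at hy
          have hy0 : (0:ℝ) < y := lt_trans hxpos hy.1
          rw [(hder y hy0).deriv]
          have := hsign_pos y hy0 hy.2
          positivity
      exact hmono (left_mem_Icc.2 hlt.le) (right_mem_Icc.2 hlt.le) hlt
    · exact absurd heq hne
    · have hanti : StrictAntiOn ψ (Icc p0 x) := by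
        apply strictAntiOn_of_deriv_neg (convex_Icc p0 x)
        · intro y hy
          exact ((hder y (lt_of_lt_of_le hp0 hy.1)).continuousAt).continuousWithinAt
        · intro y hy
          rw [interior_Icc] at hy
          have hy0 : (0:ℝ) < y := lt_trans hp0 hy.1
          rw [(hder y hy0).deriv]
          have := hsign_neg y hy.1
          have he : (0:ℝ) < Real.exp (W y + vj) := Real.exp_pos _
          nlinarith
      exact hanti (left_mem_Icc.2 hgt.le) (right_mem_Icc.2 hgt.le) hgt


lemma Hsolve {W' W'' : ℝ → ℝ} {cj m : ℝ}
    (hd2 : ∀ x > (0:ℝ), HasDerivAt W' (W'' x) x)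
    (hneg : ∀ x > (0:ℝ), W' x < 0)
    (hed : ∃ r > (1:ℝ), ∃ pb : ℝ, ∀ p > pb, W' p ≤ -r / p)
    (hcj : 0 < cj) (hm : 0 ≤ m) :
    ∃ x, cj < x ∧ x - cj + 1 / W' x = m := by
  obtain ⟨r, hr, pb, hpb⟩ := hed
  set f : ℝ → ℝ := fun x => x - cj + 1 / W' x with hf
  obtain ⟨x1, hx1pb, hx1cj, hx1big⟩ :
      ∃ x1, pb < x1 ∧ cj < x1 ∧ (m + cj) * r / (r - 1) < x1 := by
    refine ⟨max (max pb cj) ((m + cj) * r / (r - 1)) + 1, ?_, ?_, ?_⟩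
    · have := le_trans (le_max_left pb cj) (le_max_left _ ((m + cj) * r / (r - 1)))
      linarith
    · have := le_trans (le_max_right pb cj) (le_max_left _ ((m + cj) * r / (r - 1)))
      linarith
    · have := le_max_right (max pb cj) ((m + cj) * r / (r - 1))
      linarith
  have hx1pos : 0 < x1 := lt_trans hcj hx1cj
  have hder : ∀ x ∈ Ioi (0:ℝ), HasDerivAt f (1 - W'' x / (W' x) ^ 2) x := by
    intro x hx
    have h1 : HasDerivAt (fun y => (W' y)⁻¹) (-W'' x / (W' x) ^ 2) x :=
      (hd2 x hx).inv (ne_of_lt (hneg x hx))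
    have h2 : HasDerivAt (fun y => y - cj) 1 x := (hasDerivAt_id x).sub_const cj
    have h3 := h2.add h1
    have he : (1:ℝ) - W'' x / W' x ^ 2 = 1 + -W'' x / W' x ^ 2 := by ring
    rw [he, hf]
    simp only [one_div]
    exact h3
  have hfcj : f cj < 0 := by
    have h1 := hneg cj hcj
    have h2 : 1 / W' cj < 0 := by
      simp only [one_div]
      exact inv_neg''.mpr h1
    simp only [hf]
    linarith
  have hfx1 : m ≤ f x1 := by
    have hw := hpb x1 hx1pb
    have hwneg : W' x1 < 0 := hneg x1 hx1pos
    have hrpos : (0:ℝ) < r := by linarith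
    have hrxx : -r / x1 * x1 = -r := by
      field_simp
    have h5 : W' x1 * x1 ≤ -r := by nlinarith
    have hinv : -(x1 / r) ≤ 1 / W' x1 := by
      rw [le_div_iff_of_neg hwneg]
      have hgoal : r ≤ -(x1 * W' x1) := by nlinarith
      have he2 : -(x1 / r) * W' x1 = -(x1 * W' x1) / r := by ring
      rw [he2]
      exact (one_le_div hrpos).mpr hgoal
    have h6 : (m + cj) * r < x1 * (r - 1) := by
      rw [div_lt_iff₀ (by linarith : (0:ℝ) < r - 1)] at hx1big
      linarith
    have h7 : x1 / r * r = x1 := by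
      field_simp
    simp only [hf]
    nlinarith
  have hcont : ContinuousOn f (Icc cj x1) := by
    intro x hx
    exact ((hder x (lt_of_lt_of_le hcj hx.1)).continuousAt).continuousWithinAt
  have hsub := intermediate_value_Icc (le_of_lt hx1cj) hcont
  have hmem : m ∈ Icc (f cj) (f x1) := ⟨le_trans (le_of_lt hfcj) hm, hfx1⟩
  obtain ⟨x, hxmem, hfx⟩ := hsub hmem
  refine ⟨x, ?_, hfx⟩
  rcases eq_or_lt_of_le hxmem.1 with h | h
  · exfalso
    rw [← h] at hfx
    rw [hfx] at hfcj
    linarith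
  · exact h


set_option maxHeartbeats 2000000 in
theorem stmt_11 {J : ℕ} (w w' w'' : Fin J → ℝ → ℝ) (v : Fin J → ℝ) (θ : ℝ)
    (c : Fin J → ℝ) (Jf : Finset (Fin J)) (pout : Fin J → ℝ)
    (hc : ∀ j, 0 < c j)
    (hd1 : ∀ k : Fin J, ∀ x > (0:ℝ), HasDerivAt (w k) (w' k x) x)
    (hd2 : ∀ k : Fin J, ∀ x > (0:ℝ), HasDerivAt (w' k) (w'' k x) x)
    (hneg : ∀ k : Fin J, ∀ x > (0:ℝ), w' k x < 0)
    (hedsq : ∀ k : Fin J, ∃ r > (1:ℝ), ∃ pb : ℝ, ∀ p > pb, w' k p ≤ -r / p)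
    (hsq : ∀ k : Fin J, ∀ x > (0:ℝ), w'' k x / (w' k x) ^ 2 < 1)
    (hout : ∀ i, i ∉ Jf → 0 ≤ pout i) :
    let P : (Fin J → ℝ) → Fin J → ℝ := fun q i =>
      Real.exp (w i (q i) + v i) / (Real.exp θ + ∑ k, Real.exp (w k (q k) + v k))
    let profit : (Fin J → ℝ) → ℝ := fun q => ∑ i ∈ Jf, P q i * (q i - c i)
    ∃ p : Fin J → ℝ,
      -- competitor prices fixed
      (∀ i, i ∉ Jf → p i = pout i) ∧
      -- the stationary point lies in (c_f, ∞)
      (∀ j ∈ Jf, c j < p j) ∧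
      -- p is stationary for the firm's profit
      (∀ j ∈ Jf, HasDerivAt (fun x => profit (Function.update p j x)) 0 (p j)) ∧
      -- uniqueness of stationary points
      (∀ q : Fin J → ℝ, (∀ i, i ∉ Jf → q i = pout i) → (∀ j ∈ Jf, 0 < q j) →
        (∀ j ∈ Jf, HasDerivAt (fun x => profit (Function.update q j x)) 0 (q j)) →
        q = p) ∧
      -- p is the unique global maximizer over nonnegative firm prices
      (∀ q : Fin J → ℝ, (∀ i, i ∉ Jf → q i = pout i) → (∀ j ∈ Jf, 0 ≤ q j) →
        q ≠ p → profit q < profit p) := by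
  intro P profit
  have hP : P = fun q i =>
      Real.exp (w i (q i) + v i) / (Real.exp θ + ∑ k, Real.exp (w k (q k) + v k)) := rfl
  have hprof : profit = fun q => ∑ i ∈ Jf, P q i * (q i - c i) := rfl
  set S : (Fin J → ℝ) → ℝ := fun q => Real.exp θ + ∑ k, Real.exp (w k (q k) + v k)
    with hS
  have hSpos : ∀ q, 0 < S q := by
    intro q
    have : 0 ≤ ∑ k, Real.exp (w k (q k) + v k) :=
      Finset.sum_nonneg fun k _ => (Real.exp_pos _).le
    have := Real.exp_pos θ
    simp only [hS]
    linarith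
  have hprofit_eq : ∀ q, profit q =
      (∑ i ∈ Jf, Real.exp (w i (q i) + v i) * (q i - c i)) / S q := by
    intro q
    rw [hprof, hP, Finset.sum_div]
    exact Finset.sum_congr rfl fun i _ => (div_mul_eq_mul_div _ _ _)
  -- derivative of single-coordinate profit
  have hder : ∀ q : Fin J → ℝ, ∀ j ∈ Jf, 0 < q j →
      HasDerivAt (fun x => profit (Function.update q j x))
        (Real.exp (w j (q j) + v j) / S q *
          (1 + w' j (q j) * (q j - c j - profit q))) (q j) := by
    intro q j hj hq
    set B : ℝ := ∑ i ∈ Jf.erase j, Real.exp (w i (q i) + v i) * (q i - c i) with hB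
    set C : ℝ := Real.exp θ + ∑ k ∈ Finset.univ.erase j, Real.exp (w k (q k) + v k)
      with hC
    have hCpos : 0 < C := by
      have : 0 ≤ ∑ k ∈ Finset.univ.erase j, Real.exp (w k (q k) + v k) :=
        Finset.sum_nonneg fun k _ => (Real.exp_pos _).le
      have := Real.exp_pos θ
      simp only [hC]
      linarith
    have hfun : ∀ x, profit (Function.update q j x) =
        (B + Real.exp (w j x + v j) * (x - c j)) / (C + Real.exp (w j x + v j)) := by
      intro x
      rw [hprofit_eq]
      have hnum : ∑ i ∈ Jf, Real.exp (w i (Function.update q j x i) + v i) *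
          (Function.update q j x i - c i)
          = B + Real.exp (w j x + v j) * (x - c j) := by
        rw [← Finset.add_sum_erase _ _ hj, Function.update_self, hB, add_comm]
        congr 1
        refine Finset.sum_congr rfl fun i hi => ?_
        rw [Function.update_of_ne (Finset.ne_of_mem_erase hi)]
      have hden : S (Function.update q j x) = C + Real.exp (w j x + v j) := by
        simp only [hS, hC]
        rw [← Finset.add_sum_erase _ _ (Finset.mem_univ j), Function.update_self]
        have : ∑ k ∈ Finset.univ.erase j,
            Real.exp (w k (Function.update q j x k) + v k)
            = ∑ k ∈ Finset.univ.erase j, Real.exp (w k (q k) + v k) := by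
          refine Finset.sum_congr rfl fun i hi => ?_
          rw [Function.update_of_ne (Finset.ne_of_mem_erase hi)]
        rw [this]
        ring
      rw [hnum, hden]
    have hSq : S q = C + Real.exp (w j (q j) + v j) := by
      have := hfun (q j)
      simp only [hS, hC]
      rw [← Finset.add_sum_erase _ (fun k => Real.exp (w k (q k) + v k))
        (Finset.mem_univ j)]
      ring
    have hfeq : (fun x => profit (Function.update q j x)) =
        fun x => (B + Real.exp (w j x + v j) * (x - c j)) /
          (C + Real.exp (w j x + v j)) := funext hfun
    rw [hfeq]
    have hE : HasDerivAt (fun x => Real.exp (w j x + v j))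
        (Real.exp (w j (q j) + v j) * w' j (q j)) (q j) :=
      ((hd1 j (q j) hq).add_const (v j)).exp
    have hnumd : HasDerivAt (fun x => B + Real.exp (w j x + v j) * (x - c j))
        (Real.exp (w j (q j) + v j) * w' j (q j) * (q j - c j) +
          Real.exp (w j (q j) + v j)) (q j) := by
      have h1 : HasDerivAt (fun x : ℝ => x - c j) 1 (q j) :=
        (hasDerivAt_id _).sub_const (c j)
      have := (hE.mul h1).const_add B
      refine this.congr_deriv ?_
      ring
    have hdend : HasDerivAt (fun x => C + Real.exp (w j x + v j))
        (Real.exp (w j (q j) + v j) * w' j (q j)) (q j) := hE.const_add C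
    have hdenne : C + Real.exp (w j (q j) + v j) ≠ 0 := by
      have := Real.exp_pos (w j (q j) + v j)
      positivity
    have hdiv := hnumd.div hdend hdenne
    refine hdiv.congr_deriv ?_
    have hpi : profit q = (B + Real.exp (w j (q j) + v j) * (q j - c j)) /
        (C + Real.exp (w j (q j) + v j)) := by
      have h := hfun (q j)
      rwa [Function.update_eq_self] at h
    rw [hpi, hSq]
    have hEpos := Real.exp_pos (w j (q j) + v j)
    field_simp
    ring
  -- stationarity characterization
  have hstat : ∀ q : Fin J → ℝ, ∀ j ∈ Jf, 0 < q j →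
      (HasDerivAt (fun x => profit (Function.update q j x)) 0 (q j) ↔
        q j - c j + 1 / w' j (q j) = profit q) := by
    intro q j hj hq
    have hw := hneg j (q j) hq
    have hwne : w' j (q j) ≠ 0 := ne_of_lt hw
    have hinv : w' j (q j) * (1 / w' j (q j)) = 1 := by field_simp
    have hkey : 1 + w' j (q j) * (q j - c j - profit q) =
        w' j (q j) * ((q j - c j + 1 / w' j (q j)) - profit q) := by
      field_simp
      ring
    constructor
    · intro h
      have h2 := (hder q j hj hq).unique h
      have hEpos : 0 < Real.exp (w j (q j) + v j) / S q :=
        div_pos (Real.exp_pos _) (hSpos q)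
      have h3 : 1 + w' j (q j) * (q j - c j - profit q) = 0 := by
        rcases mul_eq_zero.mp h2 with h | h
        · exact absurd h (ne_of_gt hEpos)
        · exact h
      rw [hkey] at h3
      rcases mul_eq_zero.mp h3 with h | h
      · exact absurd h hwne
      · linarith [sub_eq_zero.mp h]
    · intro h
      have h3 : 1 + w' j (q j) * (q j - c j - profit q) = 0 := by
        rw [hkey, h, sub_self, mul_zero]
      have := hder q j hj hq
      rw [h3, mul_zero] at this
      exact this
  -- the "A" part of the denominator (outside + competitor terms)
  set A : (Fin J → ℝ) → ℝ := fun q =>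
      Real.exp θ + ∑ k ∈ Jfᶜ, Real.exp (w k (q k) + v k) with hA
  have hApos : ∀ q, 0 < A q := by
    intro q
    have h1 : 0 ≤ ∑ k ∈ Jfᶜ, Real.exp (w k (q k) + v k) :=
      Finset.sum_nonneg fun k _ => (Real.exp_pos _).le
    have := Real.exp_pos θ
    simp only [hA]
    linarith
  have hSsplit : ∀ q, S q = A q + ∑ k ∈ Jf, Real.exp (w k (q k) + v k) := by
    intro q
    simp only [hS, hA]
    rw [← Finset.sum_add_sum_compl Jf (fun k => Real.exp (w k (q k) + v k))]
    ring
  have hAfix : ∀ q : Fin J → ℝ, (∀ i, i ∉ Jf → q i = pout i) → A q = A pout := by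
    intro q hq
    simp only [hA]
    congr 1
    refine Finset.sum_congr rfl fun k hk => ?_
    rw [hq k (Finset.mem_compl.mp hk)]
  -- aggregate identity at a stationary point
  have haggr : ∀ q : Fin J → ℝ, (∀ j ∈ Jf, 0 < q j) →
      (∀ j ∈ Jf, q j - c j + 1 / w' j (q j) = profit q) →
      profit q * A q = ∑ j ∈ Jf, -Real.exp (w j (q j) + v j) / w' j (q j) := by
    intro q hpos hst
    have hnum : profit q * S q = ∑ i ∈ Jf, Real.exp (w i (q i) + v i) * (q i - c i) := by
      rw [hprofit_eq q, div_mul_cancel₀ _ (ne_of_gt (hSpos q))]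
    have hterm : ∀ j ∈ Jf, Real.exp (w j (q j) + v j) * (q j - c j) =
        profit q * Real.exp (w j (q j) + v j) +
          -Real.exp (w j (q j) + v j) / w' j (q j) := by
      intro j hj
      have h := hst j hj
      have hw := hneg j (q j) (hpos j hj)
      have hwne : w' j (q j) ≠ 0 := ne_of_lt hw
      have h2 : q j - c j = profit q - 1 / w' j (q j) := by linarith
      rw [h2]
      field_simp
      ring
    have hsum : ∑ i ∈ Jf, Real.exp (w i (q i) + v i) * (q i - c i) =
        profit q * (∑ k ∈ Jf, Real.exp (w k (q k) + v k)) +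
          ∑ j ∈ Jf, -Real.exp (w j (q j) + v j) / w' j (q j) := by
      rw [Finset.mul_sum, ← Finset.sum_add_distrib]
      exact Finset.sum_congr rfl hterm
    rw [hsum] at hnum
    rw [hSsplit q] at hnum
    nlinarith [hnum]
  -- helper positivity
  have hGterm : ∀ (j : Fin J) (x : ℝ), 0 < x →
      0 < -Real.exp (w j x + v j) / w' j x := by
    intro j x hx
    have h1 := Real.exp_pos (w j x + v j)
    have h2 := hneg j x hx
    have h3 : -Real.exp (w j x + v j) < 0 := by linarith
    exact div_pos_of_neg_of_neg h3 h2
  rcases Finset.eq_empty_or_nonempty Jf with hJe | hJne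
  · -- empty firm: trivial
    subst hJe
    refine ⟨pout, fun i _ => rfl, by simp, by simp, ?_, ?_⟩
    · intro q hq _ _
      funext i
      exact hq i (by simp)
    · intro q hq _ hne
      exact absurd (funext fun i => hq i (by simp)) hne
  · -- main case
    choose! σ hσ1 hσ2 using fun (j : Fin J) (m : ℝ) (hm : 0 ≤ m) =>
      Hsolve (hd2 j) (hneg j) (hedsq j) (hc j) hm
    have hσpos : ∀ (j : Fin J) (m : ℝ), 0 ≤ m → 0 < σ j m :=
      fun j m hm => lt_trans (hc j) (hσ1 j m hm)
    have hσmono : ∀ (j : Fin J) (m m' : ℝ), 0 ≤ m → 0 ≤ m' → m < m' →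
        σ j m < σ j m' := by
      intro j m m' hm hm' hlt
      rcases lt_trichotomy (σ j m) (σ j m') with h | h | h
      · exact h
      · exfalso
        have h1 := hσ2 j m hm
        have h2 := hσ2 j m' hm'
        rw [h] at h1
        rw [h1] at h2
        linarith
      · exfalso
        have := Hmono (cj := c j) (hd2 j) (hneg j) (hsq j) (hσpos j m' hm') h
        rw [hσ2 j m hm, hσ2 j m' hm'] at this
        linarith
    -- continuity of σ j on [0, ∞)
    have hσcont : ∀ j : Fin J, ContinuousOn (fun m => σ j m) (Ici 0) := by
      intro j m hm
      rw [Metric.continuousWithinAt_iff]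
      intro ε hε
      have hx0 : c j < σ j m := hσ1 j m hm
      have hx0pos : 0 < σ j m := hσpos j m hm
      obtain ⟨a, hapos, halt, hage⟩ :
          ∃ a : ℝ, 0 < a ∧ a < σ j m ∧ σ j m - ε / 2 ≤ a :=
        ⟨max (c j) (σ j m - ε / 2), lt_of_lt_of_le (hc j) (le_max_left _ _),
          max_lt hx0 (by linarith), le_max_right _ _⟩
      obtain ⟨b, hblt, hble⟩ : ∃ b : ℝ, σ j m < b ∧ b ≤ σ j m + ε / 2 :=
        ⟨σ j m + ε / 2, by linarith, le_rfl⟩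
      have hHa : a - c j + 1 / w' j a < m := by
        have h := Hmono (cj := c j) (hd2 j) (hneg j) (hsq j) hapos halt
        rwa [hσ2 j m hm] at h
      have hHb : m < b - c j + 1 / w' j b := by
        have h := Hmono (cj := c j) (hd2 j) (hneg j) (hsq j) hx0pos hblt
        rwa [hσ2 j m hm] at h
      refine ⟨min (m - (a - c j + 1 / w' j a)) ((b - c j + 1 / w' j b) - m),
        lt_min (by linarith) (by linarith), ?_⟩
      intro m' hm' hdist
      have hm'0 : (0:ℝ) ≤ m' := hm'
      rw [Real.dist_eq] at hdist
      have habs := abs_lt.mp hdist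
      have hlow : a - c j + 1 / w' j a < m' := by
        have := lt_min_iff.mp hdist
        have h2 := abs_lt.mp (this.1)
        linarith [h2.1]
      have hhigh : m' < b - c j + 1 / w' j b := by
        have := lt_min_iff.mp hdist
        have h2 := abs_lt.mp (this.2)
        linarith [h2.2]
      have hx' : c j < σ j m' := hσ1 j m' hm'0
      have hx'pos : 0 < σ j m' := hσpos j m' hm'0
      have hH' := hσ2 j m' hm'0
      have hgta : a < σ j m' := by
        rcases lt_trichotomy a (σ j m') with h | h | h
        · exact h
        · exfalso; rw [← h] at hH'; linarith
        · exfalso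
          have := Hmono (cj := c j) (hd2 j) (hneg j) (hsq j) hx'pos h
          rw [hH'] at this
          linarith
      have hltb : σ j m' < b := by
        rcases lt_trichotomy (σ j m') b with h | h | h
        · exact h
        · exfalso; rw [h] at hH'; linarith
        · exfalso
          have := Hmono (cj := c j) (hd2 j) (hneg j) (hsq j)
            (by linarith : (0:ℝ) < b) h
          rw [hH'] at this
          linarith
      rw [Real.dist_eq, abs_lt]
      constructor
      · linarith
      · linarith
    -- the aggregate function and IVT
    set Gm : ℝ → ℝ := fun m => ∑ j ∈ Jf, -Real.exp (w j (σ j m) + v j) / w' j (σ j m)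
      with hGmdef
    have hGmpos : ∀ m : ℝ, 0 ≤ m → 0 < Gm m := by
      intro m hm
      exact Finset.sum_pos (fun j _ => hGterm j _ (hσpos j m hm)) hJne
    have hGmanti : ∀ m m' : ℝ, 0 ≤ m → m ≤ m' → Gm m' ≤ Gm m := by
      intro m m' hm hle
      rcases eq_or_lt_of_le hle with h | h
      · rw [h]
      · refine le_of_lt (Finset.sum_lt_sum_of_nonempty hJne fun j _ => ?_)
        exact Ganti (hd1 j) (hd2 j) (hneg j) (hsq j) (hσpos j m hm)
          (hσmono j m m' hm (le_trans hm hle) h)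
    have hGmcont : ContinuousOn Gm (Ici 0) := by
      apply continuousOn_finset_sum
      intro j _
      intro m hm
      have hx : 0 < σ j m := hσpos j m hm
      have hgc : ContinuousAt (fun x => -Real.exp (w j x + v j) / w' j x) (σ j m) := by
        apply ContinuousAt.div
        · exact ((Real.continuous_exp.continuousAt).comp
            (((hd1 j _ hx).continuousAt).add continuousAt_const)).neg
        · exact (hd2 j _ hx).continuousAt
        · exact ne_of_lt (hneg j _ hx)
      exact hgc.comp_continuousWithinAt (hσcont j m hm)
    set A0 : ℝ := A pout with hA0def
    have hA0 : 0 < A0 := hApos pout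
    set F : ℝ → ℝ := fun m => m * A0 - Gm m with hFdef
    set M : ℝ := (1 + Gm 0) / A0 with hMdef
    have hGm0 : 0 < Gm 0 := hGmpos 0 le_rfl
    have hMpos : 0 < M := div_pos (by linarith) hA0
    have hMA0 : M * A0 = 1 + Gm 0 := div_mul_cancel₀ _ (ne_of_gt hA0)
    have hF0 : F 0 < 0 := by simp only [hFdef, zero_mul, zero_sub]; linarith
    have hFM : 0 < F M := by
      have h1 : Gm M ≤ Gm 0 := hGmanti 0 M le_rfl hMpos.le
      simp only [hFdef]
      rw [hMA0]
      linarith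
    have hFcont : ContinuousOn F (Icc 0 M) := by
      apply ContinuousOn.sub
      · exact (continuous_id.mul continuous_const).continuousOn
      · exact hGmcont.mono Icc_subset_Ici_self
    obtain ⟨mstar, hmem, hFm⟩ :=
      intermediate_value_Icc hMpos.le hFcont ⟨hF0.le, hFM.le⟩
    have hm0 : (0:ℝ) ≤ mstar := hmem.1
    have hmagg : mstar * A0 = Gm mstar := by
      simp only [hFdef] at hFm
      linarith
    have hmpos : 0 < mstar := by
      have h1 := hGmpos mstar hm0
      nlinarith
    -- the candidate point
    set p : Fin J → ℝ := fun i => if i ∈ Jf then σ i mstar else pout i with hpdef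
    have hp_out : ∀ i, i ∉ Jf → p i = pout i := by
      intro i hi; simp only [hpdef, if_neg hi]
    have hp_val : ∀ j ∈ Jf, p j = σ j mstar := by
      intro j hj; simp only [hpdef, if_pos hj]
    have hp_c : ∀ j ∈ Jf, c j < p j := by
      intro j hj; rw [hp_val j hj]; exact hσ1 j mstar hm0
    have hppos : ∀ j ∈ Jf, 0 < p j := fun j hj => lt_trans (hc j) (hp_c j hj)
    have hpH : ∀ j ∈ Jf, p j - c j + 1 / w' j (p j) = mstar := by
      intro j hj; rw [hp_val j hj]; exact hσ2 j mstar hm0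
    have hGp : ∑ j ∈ Jf, -Real.exp (w j (p j) + v j) / w' j (p j) = Gm mstar := by
      simp only [hGmdef]
      exact Finset.sum_congr rfl fun j hj => by rw [hp_val j hj]
    have hap : mstar * A0 = ∑ j ∈ Jf, -Real.exp (w j (p j) + v j) / w' j (p j) := by
      rw [hGp]; exact hmagg
    have hterm_eq : ∀ j ∈ Jf, ∀ x : ℝ,
        x - c j + 1 / w' j x = mstar → 0 < x →
        Real.exp (w j x + v j) * (x - c j) =
          mstar * Real.exp (w j x + v j) + -Real.exp (w j x + v j) / w' j x := by
      intro j _ x hx hxpos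
      have hw := hneg j x hxpos
      have hwne : w' j x ≠ 0 := ne_of_lt hw
      have h2 : x - c j = mstar - 1 / w' j x := by linarith
      rw [h2]
      field_simp
      ring
    have hprofp : profit p = mstar := by
      rw [hprofit_eq p, div_eq_iff (ne_of_gt (hSpos p))]
      have h1 : ∑ i ∈ Jf, Real.exp (w i (p i) + v i) * (p i - c i) =
          mstar * (∑ k ∈ Jf, Real.exp (w k (p k) + v k)) +
            ∑ j ∈ Jf, -Real.exp (w j (p j) + v j) / w' j (p j) := by
        rw [Finset.mul_sum, ← Finset.sum_add_distrib]
        exact Finset.sum_congr rfl fun j hj =>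
          hterm_eq j hj (p j) (hpH j hj) (hppos j hj)
      rw [h1, ← hap, hSsplit p, hAfix p hp_out]
      ring
    refine ⟨p, hp_out, hp_c, ?_, ?_, ?_⟩
    · -- stationarity
      intro j hj
      exact (hstat p j hj (hppos j hj)).mpr (by rw [hprofp]; exact hpH j hj)
    · -- uniqueness
      intro q hqout hqpos hqstat
      have hqH : ∀ j ∈ Jf, q j - c j + 1 / w' j (q j) = profit q :=
        fun j hj => (hstat q j hj (hqpos j hj)).mp (hqstat j hj)
      have haq : profit q * A0 =
          ∑ j ∈ Jf, -Real.exp (w j (q j) + v j) / w' j (q j) := by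
        have h := haggr q hqpos hqH
        rwa [hAfix q hqout] at h
      have hmq : profit q = mstar := by
        by_contra hne'
        rcases lt_or_gt_of_ne hne' with hlt | hgt
        · have hjlt : ∀ j ∈ Jf, q j < p j := by
            intro j hj
            rcases lt_trichotomy (q j) (p j) with h | h | h
            · exact h
            · exfalso
              have h1 := hqH j hj
              rw [h, hpH j hj] at h1
              linarith
            · exfalso
              have := Hmono (cj := c j) (hd2 j) (hneg j) (hsq j)
                (hppos j hj) h
              rw [hpH j hj, hqH j hj] at this
              linarith
          have hsumlt : ∑ j ∈ Jf, -Real.exp (w j (p j) + v j) / w' j (p j) <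
              ∑ j ∈ Jf, -Real.exp (w j (q j) + v j) / w' j (q j) :=
            Finset.sum_lt_sum_of_nonempty hJne fun j hj =>
              Ganti (hd1 j) (hd2 j) (hneg j) (hsq j) (hqpos j hj) (hjlt j hj)
          rw [← hap, ← haq] at hsumlt
          have := lt_of_mul_lt_mul_right hsumlt hA0.le
          linarith
        · have hjlt : ∀ j ∈ Jf, p j < q j := by
            intro j hj
            rcases lt_trichotomy (p j) (q j) with h | h | h
            · exact h
            · exfalso
              have h1 := hqH j hj
              rw [← h, hpH j hj] at h1
              linarith
            · exfalso
              have := Hmono (cj := c j) (hd2 j) (hneg j) (hsq j)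
                (hqpos j hj) h
              rw [hpH j hj, hqH j hj] at this
              linarith
          have hsumlt : ∑ j ∈ Jf, -Real.exp (w j (q j) + v j) / w' j (q j) <
              ∑ j ∈ Jf, -Real.exp (w j (p j) + v j) / w' j (p j) :=
            Finset.sum_lt_sum_of_nonempty hJne fun j hj =>
              Ganti (hd1 j) (hd2 j) (hneg j) (hsq j) (hppos j hj) (hjlt j hj)
          rw [← hap, ← haq] at hsumlt
          have := lt_of_mul_lt_mul_right hsumlt hA0.le
          linarith
      funext i
      by_cases hi : i ∈ Jf
      · have h1 := hqH i hi
        rw [hmq] at h1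
        have h2 := hpH i hi
        rcases lt_trichotomy (q i) (p i) with h | h | h
        · exfalso
          have := Hmono (cj := c i) (hd2 i) (hneg i) (hsq i) (hqpos i hi) h
          rw [h1, h2] at this
          linarith
        · exact h
        · exfalso
          have := Hmono (cj := c i) (hd2 i) (hneg i) (hsq i) (hppos i hi) h
          rw [h1, h2] at this
          linarith
      · rw [hqout i hi, hp_out i hi]
    · -- global strict maximality
      intro q hqout hqnn hqne
      rw [hprofp]
      obtain ⟨j0, hj0, hj0ne⟩ : ∃ j0 ∈ Jf, q j0 ≠ p j0 := by
        by_contra h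
        push_neg at h
        apply hqne
        funext i
        by_cases hi : i ∈ Jf
        · exact h i hi
        · rw [hqout i hi, hp_out i hi]
      rw [hprofit_eq q, div_lt_iff₀ (hSpos q)]
      have hψp : ∀ j ∈ Jf, Real.exp (w j (p j) + v j) * (p j - c j - mstar) =
          -Real.exp (w j (p j) + v j) / w' j (p j) := by
        intro j hj
        have hw := hneg j (p j) (hppos j hj)
        have hwne : w' j (p j) ≠ 0 := ne_of_lt hw
        have h2 : p j - c j - mstar = -(1 / w' j (p j)) := by
          have := hpH j hj; linarith
        rw [h2]
        field_simp
      have hle : ∀ j ∈ Jf,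
          Real.exp (w j (q j) + v j) * (q j - c j) ≤
            mstar * Real.exp (w j (q j) + v j) +
              -Real.exp (w j (p j) + v j) / w' j (p j) := by
        intro j hj
        rcases eq_or_ne (q j) (p j) with h | h
        · rw [h]
          exact le_of_eq (hterm_eq j hj (p j) (hpH j hj) (hppos j hj))
        · have hψ := psi_max (vj := v j) (hd1 j) (hd2 j) (hneg j) (hsq j) (hc j) hmpos
            (hppos j hj) (hpH j hj) (q j) (hqnn j hj) h
          rw [hψp j hj] at hψ
          nlinarith [hψ]
      have hstrict : Real.exp (w j0 (q j0) + v j0) * (q j0 - c j0) <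
          mstar * Real.exp (w j0 (q j0) + v j0) +
            -Real.exp (w j0 (p j0) + v j0) / w' j0 (p j0) := by
        have hψ := psi_max (vj := v j0) (hd1 j0) (hd2 j0) (hneg j0) (hsq j0) (hc j0) hmpos
          (hppos j0 hj0) (hpH j0 hj0) (q j0) (hqnn j0 hj0) hj0ne
        rw [hψp j0 hj0] at hψ
        nlinarith [hψ]
      have hsum : ∑ i ∈ Jf, Real.exp (w i (q i) + v i) * (q i - c i) <
          ∑ j ∈ Jf, (mstar * Real.exp (w j (q j) + v j) +
            -Real.exp (w j (p j) + v j) / w' j (p j)) :=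
        Finset.sum_lt_sum hle ⟨j0, hj0, hstrict⟩
      have hrhs : ∑ j ∈ Jf, (mstar * Real.exp (w j (q j) + v j) +
            -Real.exp (w j (p j) + v j) / w' j (p j)) = mstar * S q := by
        rw [Finset.sum_add_distrib, ← Finset.mul_sum, ← hap,
          hSsplit q, hAfix q hqout]
        ring
      rw [hrhs] at hsum
      exact hsum
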